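/- There exist universal constants c_b > 0 and C > 1 so that the following holds. Let n be a sufficiently large integer (n greater than a universal constant), let α > 0, and let θ ∈ [1/(c_b·n), c_b]. Let Y_1,…,Y_n be i.i.d. Bernoulli random variables with parameter θ, and set X = (X_1,…,X_n) with X_i = α·Y_i for each i. Then for every t ∈ [0, α·√n/2], one has ℙ{ ‖X‖₂ ≥ α·√(θ·n) + t } ≥ (1/C)·exp( −C · log(2 + t²/(θ·n·α²)) · t²/α² ). -/

import Mathlib

set_option maxHeartbeats 1000000

open MeasureTheory ENNReal Finset

/-- `μ` is the Bernoulli measure with parameter `θ` (as a measure on `ℝ`):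
it is a probability measure giving mass `θ` to `{1}` and mass `1-θ` to `{0}`. -/
def IsBernoulli (μ : Measure ℝ) (θ : ℝ) : Prop :=
  IsProbabilityMeasure μ ∧ μ {1} = ENNReal.ofReal θ ∧ μ {0} = ENNReal.ofReal (1 - θ)

/-- The Euclidean norm on `Fin n → ℝ`. -/
noncomputable def euclNorm {n : ℕ} (x : Fin n → ℝ) : ℝ := Real.sqrt (∑ i, (x i) ^ 2)

noncomputable def binB (n : ℕ) (θ : ℝ) (k : ℕ) : ℝ :=
  (n.choose k : ℝ) * θ ^ k * (1 - θ) ^ (n - k)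


/-- binomial pmf term -/

lemma binB_nonneg {n : ℕ} {θ : ℝ} (h0 : 0 ≤ θ) (h1 : θ ≤ 1) (k : ℕ) : 0 ≤ binB n θ k := by
  have h2 : (0:ℝ) ≤ 1 - θ := by linarith
  unfold binB
  have := Nat.cast_nonneg (α := ℝ) (n.choose k)
  positivity

lemma sum_binB (n : ℕ) (θ : ℝ) : ∑ k ∈ range (n + 1), binB n θ k = 1 := by
  have h := add_pow θ (1 - θ) n
  simp only [add_sub_cancel, one_pow] at h
  unfold binB
  exact (Finset.sum_congr rfl fun k _ => by ring).trans h.symm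

lemma choose_mul_succ (n i : ℕ) (hn : 1 ≤ n) :
    ((i + 1) * n.choose (i + 1) : ℝ) = n * (n - 1).choose i := by
  have h := Nat.add_one_mul_choose_eq (n - 1) i
  have h2 : n - 1 + 1 = n := Nat.succ_pred_eq_of_pos hn
  rw [h2] at h
  have h3 := h.symm
  rw [mul_comm (n.choose (i+1))] at h3
  exact_mod_cast h3

lemma sum_mul_binB (n : ℕ) (θ : ℝ) (hn : 1 ≤ n) :
    ∑ k ∈ range (n + 1), (k : ℝ) * binB n θ k = n * θ := by
  rw [Finset.sum_range_succ']
  simp only [Nat.cast_zero, zero_mul, add_zero]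
  have key : ∀ i ∈ range n, ((i+1 : ℕ) : ℝ) * binB n θ (i+1) = (n * θ) * binB (n-1) θ i := by
    intro i hi
    have hi' := Finset.mem_range.mp hi
    unfold binB
    have hsub : n - (i + 1) = (n - 1) - i := by omega
    have hpow : θ ^ (i + 1) = θ ^ i * θ := pow_succ θ i
    push_cast
    rw [show ((i:ℝ)+1) * ((n.choose (i+1) :ℝ) * θ^(i+1) * (1-θ)^(n-(i+1)))
        = (((i+1) * n.choose (i+1) :ℝ)) * θ^(i+1) * (1-θ)^(n-(i+1)) by push_cast; ring,
      choose_mul_succ n i hn, hsub, hpow]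
    ring
  rw [Finset.sum_congr rfl key, ← Finset.mul_sum]
  have : n - 1 + 1 = n := Nat.succ_pred_eq_of_pos hn
  rw [show range n = range ((n-1)+1) by rw [this], sum_binB]
  ring

lemma sum_mul2_binB (n : ℕ) (θ : ℝ) (hn : 2 ≤ n) :
    ∑ k ∈ range (n + 1), (k : ℝ) * ((k:ℝ) - 1) * binB n θ k = n * (n - 1) * θ ^ 2 := by
  rw [Finset.sum_range_succ']
  simp only [Nat.cast_zero, zero_mul, add_zero]
  have step1 : ∀ i ∈ range n, ((i+1 : ℕ) : ℝ) * (((i+1:ℕ):ℝ) - 1) * binB n θ (i+1)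
      = (n * θ) * ((i:ℝ) * binB (n-1) θ i) := by
    intro i hi
    have hi' := Finset.mem_range.mp hi
    unfold binB
    have hsub : n - (i + 1) = (n - 1) - i := by omega
    have hpow : θ ^ (i + 1) = θ ^ i * θ := pow_succ θ i
    push_cast
    rw [show ((i:ℝ)+1) * ((i:ℝ)+1-1) * ((n.choose (i+1) :ℝ) * θ^(i+1) * (1-θ)^(n-(i+1)))
        = (i:ℝ) * ((((i:ℝ)+1) * n.choose (i+1))) * θ^(i+1) * (1-θ)^(n-(i+1)) by ring]
    have := choose_mul_succ n i (by omega)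
    push_cast at this
    rw [this, hsub, hpow]
    ring
  rw [Finset.sum_congr rfl step1, ← Finset.mul_sum]
  have h1 : 1 ≤ n - 1 := by omega
  have h2 : n - 1 + 1 = n := by omega
  rw [show range n = range ((n-1)+1) by rw [h2], sum_mul_binB (n-1) θ h1]
  have : ((n - 1 : ℕ) : ℝ) = (n : ℝ) - 1 := by
    have : 1 ≤ n := by omega
    push_cast [Nat.cast_sub this]; ring
  rw [this]; ring

lemma sum_var_binB (n : ℕ) (θ : ℝ) (hn : 2 ≤ n) :
    ∑ k ∈ range (n + 1), ((k : ℝ) - n * θ) ^ 2 * binB n θ k = n * θ * (1 - θ) := by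
  have e1 := sum_binB n θ
  have e2 := sum_mul_binB n θ (by omega)
  have e3 := sum_mul2_binB n θ hn
  have expand : ∀ k ∈ range (n+1), ((k : ℝ) - n * θ) ^ 2 * binB n θ k
      = (k:ℝ) * ((k:ℝ) - 1) * binB n θ k + (1 - 2 * (n*θ)) * ((k:ℝ) * binB n θ k)
        + (n*θ)^2 * binB n θ k := by
    intro k _; ring
  rw [Finset.sum_congr rfl expand, Finset.sum_add_distrib, Finset.sum_add_distrib,
    ← Finset.mul_sum, ← Finset.mul_sum, e1, e2, e3]
  ring
lemma binB_succ (n : ℕ) (θ : ℝ) (k : ℕ) (hk : k < n) :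
    binB n θ (k+1) * (((k:ℝ) + 1) * (1 - θ)) = binB n θ k * (((n:ℝ) - k) * θ) := by
  have h := Nat.choose_succ_right_eq n k
  have hc : ((n.choose (k+1) : ℝ)) * ((k:ℝ)+1) = (n.choose k : ℝ) * ((n:ℝ) - k) := by
    have h2 := congrArg (Nat.cast (R := ℝ)) h
    push_cast [Nat.cast_sub hk.le] at h2
    exact h2
  unfold binB
  have hsub : n - k = (n - (k+1)) + 1 := by omega
  rw [hsub, pow_succ, pow_succ]
  linear_combination (θ^k * θ * (1-θ)^(n-(k+1)) * (1-θ)) * hc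

lemma binB_anti {n : ℕ} {θ : ℝ} (hθ0 : 0 < θ) (hθ1 : θ < 1) :
    ∀ k1 k2 : ℕ, θ * n ≤ k1 → k1 ≤ k2 → k2 ≤ n → binB n θ k2 ≤ binB n θ k1 := by
  intro k1 k2 h1
  induction k2 with
  | zero =>
    intro h12 _
    have hk0 : k1 = 0 := by omega
    rw [hk0]
  | succ k ih => ?_
  intro h12 h2n
  rcases Nat.lt_or_ge k1 (k+1) with hlt | hge
  · have hk1k : k1 ≤ k := by omega
    have hkn : k < n := by omega
    have step : binB n θ (k+1) ≤ binB n θ k := by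
      have hid := binB_succ n θ k hkn
      have hc : (0:ℝ) < ((k:ℝ)+1) * (1-θ) := by
        have : (0:ℝ) ≤ (k:ℝ) := Nat.cast_nonneg k
        nlinarith
      have hwk : θ * n ≤ (k:ℝ) := le_trans h1 (by exact_mod_cast hk1k)
      have hd : ((n:ℝ) - k) * θ ≤ ((k:ℝ)+1) * (1-θ) := by nlinarith
      have hBnn := binB_nonneg (n := n) (θ := θ) hθ0.le hθ1.le k
      nlinarith [hid]
    exact le_trans step (ih hk1k (by omega))
  · have : k1 = k+1 := by omega
    rw [this]

lemma binB_mono {n : ℕ} {θ : ℝ} (hθ0 : 0 < θ) (hθ1 : θ < 1) :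
    ∀ k1 k2 : ℕ, k1 ≤ k2 → (k2:ℝ) ≤ θ * n → binB n θ k1 ≤ binB n θ k2 := by
  intro k1 k2
  induction k2 with
  | zero =>
    intro h12 _
    have hk0 : k1 = 0 := by omega
    rw [hk0]
  | succ k ih => ?_
  intro h12 h2
  rcases Nat.lt_or_ge k1 (k+1) with hlt | hge
  · have hk1k : k1 ≤ k := by omega
    have hk1 : ((k:ℝ)+1) ≤ θ * n := by exact_mod_cast h2
    have hkn : k < n := by
      by_contra hc
      push_neg at hc
      have : (n:ℝ) ≤ (k:ℝ) := by exact_mod_cast hc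
      nlinarith [Nat.cast_nonneg (α := ℝ) n]
    have hk2 : (k:ℝ) ≤ θ * n := by linarith
    have step : binB n θ k ≤ binB n θ (k+1) := by
      have hid := binB_succ n θ k hkn
      have hc : (0:ℝ) < ((k:ℝ)+1) * (1-θ) := by
        have : (0:ℝ) ≤ (k:ℝ) := Nat.cast_nonneg k
        nlinarith
      have hd : ((k:ℝ)+1) * (1-θ) ≤ ((n:ℝ) - k) * θ := by nlinarith
      have hBnn := binB_nonneg (n := n) (θ := θ) hθ0.le hθ1.le k
      nlinarith [hid]
    exact le_trans (ih hk1k (by linarith [Nat.cast_nonneg (α := ℝ) k])) step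
  · have : k1 = k+1 := by omega
    rw [this]

lemma binB_chain {n : ℕ} {θ : ℝ} (hθ0 : 0 < θ) (hθ1 : θ < 1) (c : ℝ) (hc0 : 0 < c)
    (a b : ℕ)
    (hstep : ∀ j, a ≤ j → j + 1 ≤ b → c * binB n θ j ≤ binB n θ (j+1)) :
    ∀ i, a + i ≤ b → c ^ i * binB n θ a ≤ binB n θ (a + i) := by
  intro i
  induction i with
  | zero => simp
  | succ i ih =>
    intro hib
    have h1 := ih (by omega)
    have h2 := hstep (a+i) (by omega) (by omega)
    have hBnn := binB_nonneg (n := n) (θ := θ) hθ0.le hθ1.le (a+i)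
    calc c ^ (i+1) * binB n θ a = c * (c ^ i * binB n θ a) := by ring
    _ ≤ c * binB n θ (a+i) := by nlinarith [pow_pos hc0 i]
    _ ≤ binB n θ (a+i+1) := h2
lemma binB_mode (n : ℕ) (θ : ℝ) (hθ0 : 0 < θ) (hθu : θ ≤ 1/100) (hw : 100 ≤ θ * n) :
    1 / (20 * Real.sqrt (θ * n)) ≤ binB n θ ⌈θ * n⌉₊ := by
  set w : ℝ := θ * n with hwdef
  set s0 : ℝ := Real.sqrt w with hs0def
  have hθ1 : θ < 1 := by linarith
  have hw0 : (0:ℝ) < w := by linarith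
  have hs0sq : s0 ^ 2 = w := Real.sq_sqrt hw0.le
  have hs0pos : 0 < s0 := Real.sqrt_pos.mpr hw0
  have hs10 : 10 ≤ s0 := by
    nlinarith [hs0sq]
  have hn2 : 2 ≤ n := by
    by_contra hc
    push_neg at hc
    interval_cases n <;> simp_all <;> nlinarith
  have hnw : w ≤ (n:ℝ) / 100 := by
    have : (0:ℝ) < n := by positivity
    calc w = θ * n := rfl
    _ ≤ (1/100) * n := by nlinarith
    _ = (n:ℝ)/100 := by ring
  set m0 : ℕ := ⌈w⌉₊ with hm0def
  have hm0w : w ≤ m0 := Nat.le_ceil w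
  have hm0w' : (m0:ℝ) < w + 1 := Nat.ceil_lt_add_one hw0.le
  have hm01 : 1 ≤ m0 := Nat.one_le_ceil_iff.mpr hw0
  have hm0n : m0 ≤ n := by
    have : (m0 : ℝ) < (n:ℝ) := by
      have : (0:ℝ) < n := by positivity
      nlinarith
    exact_mod_cast this.le
  -- Chebyshev
  set W : Finset ℕ := (range (n+1)).filter (fun k : ℕ => |(k:ℝ) - w| < 3 * s0) with hWdef
  have hcheb : (8:ℝ)/9 ≤ ∑ k ∈ W, binB n θ k := by
    have hsplit := Finset.sum_filter_add_sum_filter_not (range (n+1))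
      (fun k : ℕ => |(k:ℝ) - w| < 3 * s0) (binB n θ)
    have htail : ∑ k ∈ (range (n+1)).filter (fun k : ℕ => ¬ |(k:ℝ) - w| < 3 * s0), binB n θ k
        ≤ 1/9 := by
      have h1 : ∀ k ∈ (range (n+1)).filter (fun k : ℕ => ¬ |(k:ℝ) - w| < 3 * s0),
          binB n θ k ≤ ((k:ℝ) - w)^2 * binB n θ k / (9 * w) := by
        intro k hk
        have hk2 := (Finset.mem_filter.mp hk).2
        push_neg at hk2
        have habs : (3*s0)^2 ≤ ((k:ℝ) - w)^2 := by
          have := abs_nonneg ((k:ℝ) - w)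
          nlinarith [sq_abs ((k:ℝ) - w)]
        have hBnn := binB_nonneg (n := n) (θ := θ) hθ0.le hθ1.le k
        have h9 : 9 * w ≤ ((k:ℝ)-w)^2 := by nlinarith [hs0sq]
        rw [le_div_iff₀ (by positivity)]
        nlinarith [mul_nonneg (sub_nonneg.mpr h9) hBnn]
      calc ∑ k ∈ (range (n+1)).filter (fun k : ℕ => ¬ |(k:ℝ) - w| < 3 * s0), binB n θ k
          ≤ ∑ k ∈ (range (n+1)).filter (fun k : ℕ => ¬ |(k:ℝ) - w| < 3 * s0),
            ((k:ℝ) - w)^2 * binB n θ k / (9 * w) := Finset.sum_le_sum h1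
        _ ≤ ∑ k ∈ range (n+1), ((k:ℝ) - w)^2 * binB n θ k / (9 * w) := by
            apply Finset.sum_le_sum_of_subset_of_nonneg (Finset.filter_subset _ _)
            intro k _ _
            have hBnn := binB_nonneg (n := n) (θ := θ) hθ0.le hθ1.le k
            positivity
        _ = (∑ k ∈ range (n+1), ((k:ℝ) - n*θ)^2 * binB n θ k) / (9 * w) := by
            rw [Finset.sum_div]
            exact Finset.sum_congr rfl fun k _ => by rw [hwdef, mul_comm θ (n:ℝ)]
        _ = (n * θ * (1 - θ)) / (9 * w) := by rw [sum_var_binB n θ hn2]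
        _ ≤ 1/9 := by
            rw [div_le_iff₀ (by positivity)]
            nlinarith
    have := sum_binB n θ
    linarith [hsplit, htail, this]
  -- window size
  have hWcard : (W.card : ℝ) ≤ 6 * s0 + 2 := by
    have hsub : W ⊆ Finset.Icc ⌈w - 3*s0⌉₊ ⌊w + 3*s0⌋₊ := by
      intro k hk
      have hk2 := (Finset.mem_filter.mp hk).2
      rw [abs_lt] at hk2
      rw [Finset.mem_Icc]
      constructor
      · exact Nat.ceil_le.mpr (by linarith)
      · exact Nat.le_floor (by linarith)
    have hcard := Finset.card_le_card hsub
    rw [Nat.card_Icc] at hcard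
    set a := ⌈w - 3*s0⌉₊
    set b := ⌊w + 3*s0⌋₊
    rcases le_or_gt a (b+1) with hab | hab
    · have h1 : ((b + 1 - a : ℕ) : ℝ) = (b:ℝ) + 1 - a := by
        push_cast [Nat.cast_sub hab]
        ring
      have h2 : (b:ℝ) ≤ w + 3*s0 := Nat.floor_le (by nlinarith)
      have h3 : w - 3*s0 ≤ (a:ℝ) := Nat.le_ceil _
      have h4 : (W.card : ℝ) ≤ ((b + 1 - a : ℕ) : ℝ) := by exact_mod_cast hcard
      rw [h1] at h4
      linarith
    · have : b + 1 - a = 0 := by omega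
      rw [this] at hcard
      have : W.card = 0 := by omega
      rw [this]
      push_cast
      nlinarith
  -- extract good point
  have hk0 : ∃ k0 ∈ W, 1 / (8 * s0) ≤ binB n θ k0 := by
    by_contra hc
    push_neg at hc
    have hbound : ∑ k ∈ W, binB n θ k ≤ W.card * (1 / (8 * s0)) := by
      calc ∑ k ∈ W, binB n θ k ≤ ∑ k ∈ W, 1 / (8*s0) :=
        Finset.sum_le_sum (fun k hk => (hc k hk).le)
      _ = W.card * (1 / (8*s0)) := by rw [Finset.sum_const]; ring
    have : (W.card : ℝ) * (1 / (8*s0)) ≤ (6*s0+2) * (1/(8*s0)) := by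
      apply mul_le_mul_of_nonneg_right hWcard
      positivity
    have hlt : (6*s0+2) * (1/(8*s0)) < 8/9 := by
      rw [mul_one_div, div_lt_iff₀ (by positivity)]
      linarith
    linarith
  obtain ⟨k0, hk0W, hk0B⟩ := hk0
  have hk0n : k0 ≤ n := by
    have := (Finset.mem_filter.mp hk0W).1
    rw [Finset.mem_range] at this
    omega
  rcases le_or_gt m0 k0 with hcase | hcase
  · -- k0 ≥ m0 : binB decreasing
    have := binB_anti hθ0 hθ1 m0 k0 hm0w hcase hk0n
    calc 1 / (20 * s0) ≤ 1 / (8 * s0) := by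
          apply div_le_div_of_nonneg_left one_pos.le (by positivity) (by linarith)
      _ ≤ binB n θ k0 := hk0B
      _ ≤ binB n θ m0 := this
  · -- k0 < m0
    have hk0m : k0 ≤ m0 - 1 := by omega
    have hm1 : ((m0 - 1 : ℕ) : ℝ) = (m0:ℝ) - 1 := by
      push_cast [Nat.cast_sub hm01]; ring
    have hmono := binB_mono (n := n) hθ0 hθ1 k0 (m0-1) hk0m (by rw [hm1]; linarith)
    have hm1n : m0 - 1 < n := by omega
    have hid := binB_succ n θ (m0-1) hm1n
    rw [show m0 - 1 + 1 = m0 by omega] at hid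
    have hBm1nn := binB_nonneg (n := n) (θ := θ) hθ0.le hθ1.le (m0-1)
    have hstep : (0.45 : ℝ) * binB n θ (m0-1) ≤ binB n θ m0 := by
      have e1 : ((n:ℝ) - ((m0-1:ℕ):ℝ)) * θ ≥ 0.99 * w := by
        rw [hm1]
        have : (n:ℝ) - ((m0:ℝ) - 1) ≥ (n:ℝ) - w := by linarith
        nlinarith [hw0]
      have e2 : ((((m0-1):ℕ):ℝ) + 1) * (1 - θ) ≤ 1.01 * w := by
        rw [hm1]
        nlinarith
      have e3 : (0:ℝ) < ((((m0-1):ℕ):ℝ) + 1) * (1 - θ) := by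
        rw [hm1]
        nlinarith
      nlinarith [hid, hBm1nn]
    calc 1 / (20 * s0) ≤ 0.45 * (1 / (8 * s0)) := by
          rw [mul_one_div, div_le_div_iff₀ (by positivity) (by positivity)]
          nlinarith
      _ ≤ 0.45 * binB n θ k0 := by linarith
      _ ≤ 0.45 * binB n θ (m0-1) := by linarith
      _ ≤ binB n θ m0 := hstep
/-! ### arithmetic helper lemmas -/

lemma keyA (θ w D x y : ℝ) (hθ0 : 0 < θ) (hθu : θ ≤ 1/100) (hw : 100 ≤ w)
    (hD0 : 0 < D) (hDw : D ≤ 0.33 * w) (hx : x ≤ (w + D) * (1 - θ))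
    (hy : w * (1-θ) - D * θ ≤ y) : x ≤ (1 + 5*(D+1)/w) * y := by
  have hw0 : (0:ℝ) < w := by linarith
  have hwθ : w * θ ≤ 0.01 * w := by nlinarith
  have hDθ : D * θ ≤ 0.01 * D := by nlinarith
  have hy98 : 0.98 * w ≤ y := by nlinarith
  have hρy : 4.9 * (D+1) ≤ 5*(D+1)/w * y := by
    rw [div_mul_eq_mul_div, le_div_iff₀ hw0]
    nlinarith
  nlinarith

lemma keyB (a u : ℝ) (ha : 10 ≤ a) (hu0 : 0 ≤ u) (hu : u ≤ a/10) :
    5 * (2*a*u + u^2 + a + 3)^2 ≤ a^2 * (60 + 276 * u^2) := by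
  have hu2 : u^2 ≤ a^2/100 := by nlinarith
  have h1 : 5*u^4 ≤ 0.05*(a^2*u^2) := by nlinarith [sq_nonneg u]
  have h2 : 20*a*u^3 ≤ 2*(a^2*u^2) := by nlinarith [mul_nonneg (mul_nonneg hu0 hu0) hu0, sq_nonneg u]
  have h3 : 5*(a+3)^2 ≤ 8.45*a^2 := by nlinarith
  have h4 : 20*a^2*u ≤ 10*(a^2*u^2) + 10*a^2 := by nlinarith [sq_nonneg (u-1), sq_nonneg a]
  have h5 : 60*a*u ≤ 3*(a^2*u^2) + 3*a^2 := by nlinarith [sq_nonneg (u-1), sq_nonneg a, mul_nonneg hu0 (by linarith : (0:ℝ) ≤ a)]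
  have h6 : 10*a*u^2 ≤ a^2*u^2 := by nlinarith [mul_nonneg (by linarith : (0:ℝ) ≤ a - 10) (sq_nonneg u)]
  have h7 : 30*u^2 ≤ 0.3*(a^2*u^2) := by nlinarith [sq_nonneg u]
  nlinarith [h1, h2, h3, h4, h5, h6, h7]

lemma keyC (w D X L u : ℝ) (hw : 100 ≤ w) (hX0 : 0 ≤ X) (hXD : X ≤ D) (hD0 : 0 < D)
    (hq : 5*(D+1)^2 ≤ w*(60+276*u^2)) (hL : 0.69 ≤ L) :
    5*(D+1)/w * X ≤ 60 + 400 * L * u^2 := by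
  have hw0 : (0:ℝ) < w := by linarith
  have h1 : 5*(D+1) * X ≤ 5*(D+1)^2 := by nlinarith
  have h2 : 5*(D+1)/w * X = 5*(D+1)*X/w := by ring
  have h3 : 5*(D+1)*X/w ≤ (w*(60+276*u^2))/w := by
    apply (div_le_div_iff_of_pos_right hw0).mpr
    linarith
  have h4 : (w*(60+276*u^2))/w = 60 + 276*u^2 := by field_simp
  have h5 : 276*u^2 ≤ 400 * L * u^2 := by nlinarith [sq_nonneg u]
  rw [h2]
  linarith [h3.trans_eq h4]

lemma keyE (a u w j1 : ℝ) (ha : 10 ≤ a) (hu1 : 1 ≤ u) (hau : a ≤ 10*u)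
    (hw100 : w ≤ 100*u^2) (hj : j1 ≤ w + (2*a*u + u^2 + a + 2)) :
    j1 ≤ 133 * u^2 := by
  have h1 : 2*a*u ≤ 20*u^2 := by nlinarith [mul_nonneg (by linarith : (0:ℝ) ≤ u) (by linarith : (0:ℝ) ≤ 10*u - a)]
  have h2 : a ≤ 10*u^2 := by nlinarith
  have h3 : (2:ℝ) ≤ 2*u^2 := by nlinarith
  linarith

lemma keyF (u L X : ℝ) (hu1 : 1 ≤ u) (hX0 : 0 ≤ X) (hXu : X ≤ 33 * u^2)
    (hL : 0.69 ≤ L) : (6 + L) * X ≤ 60 + 400 * L * u^2 := by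
  have h1 : (6 + L) * X ≤ (6 + L) * (33*u^2) := by nlinarith
  nlinarith [sq_nonneg u, mul_nonneg (by linarith : (0:ℝ) ≤ L) (sq_nonneg u)]

lemma exp6 : (380:ℝ) ≤ Real.exp 6 := by
  have h1 : Real.exp ((6:ℕ) * (1:ℝ)) = Real.exp 1 ^ 6 := Real.exp_nat_mul 1 6
  have h2 : (2.7:ℝ) ≤ Real.exp 1 := by linarith [Real.exp_one_gt_d9]
  have h3 : (2.7:ℝ)^6 ≤ Real.exp 1 ^ 6 := pow_le_pow_left₀ (by norm_num) h2 6
  have h4 : ((6:ℕ):ℝ) * (1:ℝ) = (6:ℝ) := by norm_num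
  rw [h4] at h1
  rw [h1]
  nlinarith


lemma keyDw (s0 u w : ℝ) (h10 : 10 ≤ s0) (hsq : s0^2 = w) (hu0 : 0 ≤ u) (hu : u ≤ s0/10) :
    2*s0*u + u^2 + s0 + 2 ≤ 0.33*w := by
  have h1 : 2*s0*u ≤ 0.2*w := by nlinarith [mul_nonneg (by linarith : (0:ℝ) ≤ s0) (by linarith : (0:ℝ) ≤ s0/10 - u)]
  have h2 : u^2 ≤ 0.01*w := by nlinarith
  have h3 : s0 ≤ 0.1*w := by nlinarith
  have h4 : (2:ℝ) ≤ 0.02*w := by nlinarith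
  linarith

lemma keyW100 (s0 u w : ℝ) (hsq : s0^2 = w) (hs0 : 0 < s0) (hu : s0 ≤ 10*u) :
    w ≤ 100*u^2 := by nlinarith

lemma keyD33 (s0 u : ℝ) (h10 : 10 ≤ s0) (hu0 : 0 ≤ u) (hu1 : 1 ≤ u) (hs0u : s0 ≤ 10*u) :
    2*s0*u + u^2 + s0 + 2 ≤ 33*u^2 := by
  have h1 : 2*s0*u ≤ 20*u^2 := by nlinarith [mul_nonneg hu0 (by linarith : (0:ℝ) ≤ 10*u - s0)]
  have h2 : s0 ≤ 10*u^2 := by nlinarith [mul_nonneg (by linarith : (0:ℝ) ≤ u - 1) hu0]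
  have h3 : (2:ℝ) ≤ 2*u^2 := by nlinarith
  nlinarith [sq_nonneg u]

lemma partB (n : ℕ) (θ u : ℝ) (hn : 10^6 ≤ n)
    (hθ0 : 0 < θ) (hθu : θ ≤ 1/100) (hw : 100 ≤ θ * n)
    (hu0 : 0 ≤ u) (hun : u ≤ Real.sqrt n / 2) :
    Real.exp (-(1000 + 400 * Real.log (2 + u^2/(θ*n)) * u^2)) ≤
      ∑ k ∈ Finset.Icc ⌈(Real.sqrt (θ*n) + u)^2⌉₊
          (⌈(Real.sqrt (θ*n) + u)^2⌉₊ + ⌈Real.sqrt (θ*n)⌉₊), binB n θ k := by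
  have hθ1 : θ < 1 := by linarith
  have hn' : (10:ℝ)^6 ≤ n := by exact_mod_cast hn
  set w : ℝ := θ * n with hwdef
  set s0 : ℝ := Real.sqrt w with hs0def
  have hw0 : (0:ℝ) < w := by linarith
  have hs0sq : s0 ^ 2 = w := Real.sq_sqrt hw0.le
  have hs0pos : 0 < s0 := Real.sqrt_pos.mpr hw0
  have hs10 : 10 ≤ s0 := by nlinarith [hs0sq, hs0pos]
  have hs0w : 10 * s0 ≤ w := by nlinarith [hs0sq]
  have hnpos : (0:ℝ) < n := by positivity
  have hnw : w ≤ (n:ℝ) / 100 := by nlinarith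
  have hsqn : (Real.sqrt n) ^ 2 = (n:ℝ) := Real.sq_sqrt hnpos.le
  have hsqn0 : 0 < Real.sqrt n := Real.sqrt_pos.mpr hnpos
  have hsqnbig : 1000 ≤ Real.sqrt n := by nlinarith [hsqn, hsqn0]
  have hsqn_n : Real.sqrt n ≤ (n:ℝ)/1000 := by nlinarith [hsqn, hsqnbig, hsqn0]
  have hsn : s0 ≤ Real.sqrt n / 10 := by nlinarith [hs0sq, hsqn, hs0pos, hsqn0]
  set b : ℝ := (s0 + u)^2 with hbdef
  have hb0 : 0 ≤ b := sq_nonneg _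
  have hbexp : b = w + 2*s0*u + u^2 := by
    have h : (s0+u)^2 = s0^2 + 2*s0*u + u^2 := by ring
    rw [hbdef, h, hs0sq]
  have hwb : w ≤ b := by
    rw [hbexp]
    nlinarith [mul_nonneg hs0pos.le hu0, sq_nonneg u]
  have hbn : b ≤ 0.36 * n := by
    have h1 : s0 + u ≤ 0.6 * Real.sqrt n := by linarith
    have h2 : (s0+u)^2 ≤ (0.6*Real.sqrt n)^2 :=
      pow_le_pow_left₀ (by positivity) h1 2
    nlinarith [hsqn]
  set m0 : ℕ := ⌈w⌉₊ with hm0def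
  set m : ℕ := ⌈b⌉₊ with hmdef
  set r : ℕ := ⌈s0⌉₊ with hrdef
  set mr : ℕ := m + r with hmrdef
  have hm0w : w ≤ (m0:ℝ) := Nat.le_ceil w
  have hm0w' : (m0:ℝ) < w + 1 := Nat.ceil_lt_add_one hw0.le
  have hmb : b ≤ (m:ℝ) := Nat.le_ceil b
  have hmb' : (m:ℝ) < b + 1 := Nat.ceil_lt_add_one hb0
  have hrs : s0 ≤ (r:ℝ) := Nat.le_ceil s0
  have hrs' : (r:ℝ) < s0 + 1 := Nat.ceil_lt_add_one hs0pos.le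
  have hm0m : m0 ≤ m := Nat.ceil_le_ceil hwb
  have hmrR : (mr:ℝ) = (m:ℝ) + r := by push_cast [hmrdef]; ring
  set D : ℝ := 2*s0*u + u^2 + s0 + 2 with hDdef
  have hD0 : 0 < D := by positivity
  have hmrD : (mr:ℝ) < w + D := by
    rw [hmrR, hDdef]
    linarith [hbexp]
  have hmrn2 : 2 * mr ≤ n := by
    have hu2 : u^2 ≤ (Real.sqrt n/2)^2 := pow_le_pow_left₀ hu0 hun 2
    have h2 : 2 * (mr:ℝ) ≤ (n:ℝ) := by
      have : (mr:ℝ) < 0.36*n + s0 + 2 := by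
        rw [hmrR]; linarith
      linarith [hsqn_n, hsn]
    exact_mod_cast h2
  have hmrn : mr ≤ n := by omega
  set X : ℕ := mr - m0 with hXdef
  have hXsum : m0 + X = mr := by omega
  have hXD : (X:ℝ) ≤ D := by
    have hle : m0 ≤ mr := by omega
    have h1 : (X:ℝ) = (mr:ℝ) - m0 := by
      rw [hXdef, Nat.cast_sub hle]
    rw [h1]
    linarith
  set L : ℝ := Real.log (2 + u^2/w) with hLdef
  have hL2 : Real.log 2 ≤ L := by
    apply Real.log_le_log (by norm_num)
    have : 0 ≤ u^2/w := by positivity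
    linarith
  have hlog2 : (0.69:ℝ) ≤ Real.log 2 := by linarith [Real.log_two_gt_d9]
  have hL069 : (0.69:ℝ) ≤ L := by linarith
  -- facts about j in the step range
  have hjfacts : ∀ j : ℕ, m0 ≤ j → j + 1 ≤ mr →
      w ≤ (j:ℝ) ∧ ((j:ℝ)+1) ≤ w + D ∧ (n:ℝ)/2 ≤ (n:ℝ) - j ∧ w*(1-θ) - D*θ ≤ ((n:ℝ)-j)*θ := by
    intro j hj1 hj2
    have hc1 : ((j:ℝ)+1) ≤ (mr:ℝ) := by exact_mod_cast hj2
    have hc3 : 2*(mr:ℝ) ≤ n := by exact_mod_cast hmrn2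
    have hjw : w ≤ (j:ℝ) := le_trans hm0w (by exact_mod_cast hj1)
    refine ⟨hjw, by linarith, by linarith, ?_⟩
    have h1 : ((n:ℝ) - j)*θ = w - θ*j := by rw [hwdef]; ring
    have h2 : θ*(j:ℝ) ≤ θ*(w + D) :=
      mul_le_mul_of_nonneg_left (by linarith) hθ0.le
    have h3 : θ*(w+D) = w*θ + D*θ := by ring
    linarith [h1, h2]
  obtain ⟨ρ, hρ0, hkey, hρX⟩ :
      ∃ ρ : ℝ, 0 ≤ ρ ∧
        (∀ j : ℕ, m0 ≤ j → j + 1 ≤ mr →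
          ((j:ℝ)+1)*(1-θ) ≤ Real.exp ρ * (((n:ℝ) - j)*θ)) ∧
        ρ * X ≤ 60 + 400 * L * u^2 := by
    rcases le_or_gt u (s0/10) with hu | hu
    · -- moderate deviations
      have hDw : D ≤ 0.33 * w := by
        rw [hDdef]
        exact keyDw s0 u w hs10 hs0sq hu0 hu
      refine ⟨5*(D+1)/w, by positivity, ?_, ?_⟩
      · intro j hj1 hj2
        obtain ⟨hjw, hja, hjc, hjd⟩ := hjfacts j hj1 hj2
        have hx : ((j:ℝ)+1)*(1-θ) ≤ (w + D)*(1-θ) :=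
          mul_le_mul_of_nonneg_right hja (by linarith)
        have hmid := keyA θ w D (((j:ℝ)+1)*(1-θ)) (((n:ℝ)-j)*θ) hθ0 hθu hw hD0 hDw hx hjd
        have hexp : 1 + 5*(D+1)/w ≤ Real.exp (5*(D+1)/w) := by linarith [Real.add_one_le_exp (5*(D+1)/w)]
        have hynn : 0 ≤ ((n:ℝ)-j)*θ := mul_nonneg (by linarith) hθ0.le
        calc ((j:ℝ)+1)*(1-θ) ≤ (1 + 5*(D+1)/w) * (((n:ℝ)-j)*θ) := hmid
          _ ≤ Real.exp (5*(D+1)/w) * (((n:ℝ)-j)*θ) :=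
              mul_le_mul_of_nonneg_right hexp hynn
      · have hq : 5*(D+1)^2 ≤ w*(60+276*u^2) := by
          have hDe : D + 1 = 2*s0*u + u^2 + s0 + 3 := by rw [hDdef]; ring
          rw [hDe, ← hs0sq]
          exact keyB s0 u hs10 hu0 hu
        exact keyC w D X L u hw (Nat.cast_nonneg X) hXD hD0 hq hL069
    · -- large deviations
      have hu1 : 1 ≤ u := by linarith
      have hs0u : s0 ≤ 10*u := by linarith
      have hw100 : w ≤ 100*u^2 := keyW100 s0 u w hs0sq hs0pos hs0u
      refine ⟨6 + L, by linarith, ?_, ?_⟩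
      · intro j hj1 hj2
        obtain ⟨hjw, hja, hjc, hjd⟩ := hjfacts j hj1 hj2
        have hja2 : ((j:ℝ)+1) ≤ 133*u^2 := keyE s0 u w ((j:ℝ)+1) hs10 hu1 hs0u hw100 (by rw [hDdef] at hja; linarith)
        have hexpρ : Real.exp (6 + L) = Real.exp 6 * (2 + u^2/w) := by
          rw [Real.exp_add, hLdef, Real.exp_log (by positivity)]
        have hnjθ : w/2 ≤ ((n:ℝ) - j)*θ := by
          have h1 := mul_le_mul_of_nonneg_right hjc hθ0.le
          have h2 : (n:ℝ)/2 * θ = w/2 := by rw [hwdef]; ring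
          linarith
        have hrhs : 190 * u^2 ≤ Real.exp (6 + L) * (((n:ℝ) - j)*θ) := by
          have h380 := exp6
          have h5 : Real.exp 6 * (2 + u^2/w) * (w/2) ≤ Real.exp (6+L) * (((n:ℝ)-j)*θ) := by
            rw [hexpρ]
            apply mul_le_mul_of_nonneg_left hnjθ
            positivity
          have h6 : 190 * u^2 ≤ Real.exp 6 * (2 + u^2/w) * (w/2) := by
            have h7 : 380 * (u^2/w) * (w/2) ≤ Real.exp 6 * (2 + u^2/w) * (w/2) := by
              have hq0 : 0 ≤ u^2/w := by positivity
              have h8 : (380:ℝ) * (u^2/w) ≤ Real.exp 6 * (2 + u^2/w) := by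
                have h8a : (380:ℝ)*(u^2/w) ≤ Real.exp 6 * (u^2/w) :=
                  mul_le_mul_of_nonneg_right h380 hq0
                have h8b : Real.exp 6*(2+u^2/w) = 2*Real.exp 6 + Real.exp 6*(u^2/w) := by
                  ring
                linarith [Real.exp_pos 6]
              apply mul_le_mul_of_nonneg_right h8 (by linarith)
            have h8 : 380 * (u^2/w) * (w/2) = 190 * u^2 := by field_simp; ring
            linarith
          linarith
        have hlhs : ((j:ℝ)+1)*(1-θ) ≤ ((j:ℝ)+1) := by
          have h9 := mul_nonneg (by positivity : (0:ℝ) ≤ (j:ℝ)+1) hθ0.le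
          have h10 : ((j:ℝ)+1)*(1-θ) = ((j:ℝ)+1) - ((j:ℝ)+1)*θ := by ring
          linarith
        have h11 : (133:ℝ)*u^2 ≤ 190*u^2 := by linarith [sq_nonneg u]
        linarith
      · have hD33 : D ≤ 33*u^2 := by
          rw [hDdef]
          exact keyD33 s0 u hs10 hu0 hu1 hs0u
        exact keyF u L X hu1 (Nat.cast_nonneg X) (le_trans hXD hD33) hL069
  -- step property
  have hstep : ∀ j, m0 ≤ j → j + 1 ≤ mr →
      Real.exp (-ρ) * binB n θ j ≤ binB n θ (j+1) := by
    intro j hj1 hj2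
    have hjn : j < n := by omega
    have hid := binB_succ n θ j hjn
    have hk := hkey j hj1 hj2
    have hBnn := binB_nonneg (n := n) (θ := θ) hθ0.le hθ1.le j
    have hpos : (0:ℝ) < ((j:ℝ)+1)*(1-θ) :=
      mul_pos (by positivity) (by linarith)
    have h2 : Real.exp (-ρ) * (((j:ℝ)+1)*(1-θ)) ≤ ((n:ℝ)-j)*θ := by
      have h3 := mul_le_mul_of_nonneg_left hk (Real.exp_pos (-ρ)).le
      have h4 : Real.exp (-ρ) * (Real.exp ρ * (((n:ℝ)-j)*θ)) = ((n:ℝ)-j)*θ := by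
        rw [← mul_assoc, ← Real.exp_add]
        simp
      linarith [h3.trans_eq h4]
    have h5 : (Real.exp (-ρ) * binB n θ j) * (((j:ℝ)+1)*(1-θ))
        ≤ binB n θ (j+1) * (((j:ℝ)+1)*(1-θ)) := by
      rw [hid]
      calc (Real.exp (-ρ) * binB n θ j) * (((j:ℝ)+1)*(1-θ))
          = binB n θ j * (Real.exp (-ρ) * (((j:ℝ)+1)*(1-θ))) := by ring
        _ ≤ binB n θ j * (((n:ℝ)-j)*θ) := mul_le_mul_of_nonneg_left h2 hBnn
    exact le_of_mul_le_mul_right h5 hpos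
  -- chain
  have hchain := binB_chain hθ0 hθ1 (Real.exp (-ρ)) (Real.exp_pos _) m0 mr hstep X
    (le_of_eq hXsum)
  rw [hXsum] at hchain
  have hexpX : Real.exp (-ρ) ^ X = Real.exp (-(ρ * X)) := by
    rw [← Real.exp_nat_mul]
    congr 1
    ring
  have hmode := binB_mode n θ hθ0 hθu hw
  have hBmr : Real.exp (-(ρ * X)) * (1/(20*s0)) ≤ binB n θ mr := by
    calc Real.exp (-(ρ * X)) * (1/(20*s0))
        ≤ Real.exp (-(ρ * X)) * binB n θ m0 :=
          mul_le_mul_of_nonneg_left hmode (Real.exp_pos _).le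
      _ = Real.exp (-ρ) ^ X * binB n θ m0 := by rw [hexpX]
      _ ≤ binB n θ mr := hchain
  have hBmrnn := binB_nonneg (n := n) (θ := θ) hθ0.le hθ1.le mr
  -- sum lower bound
  have hsum : ((r:ℝ)+1) * binB n θ mr ≤ ∑ k ∈ Finset.Icc m mr, binB n θ k := by
    have hterm : ∀ k ∈ Finset.Icc m mr, binB n θ mr ≤ binB n θ k := by
      intro k hk
      rw [Finset.mem_Icc] at hk
      apply binB_anti hθ0 hθ1 k mr ?_ hk.2 hmrn
      calc θ * (n:ℝ) = w := rfl
        _ ≤ m0 := hm0w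
        _ ≤ (m:ℝ) := by exact_mod_cast hm0m
        _ ≤ (k:ℝ) := by exact_mod_cast hk.1
    have hcard : (Finset.Icc m mr).card = r + 1 := by
      rw [Nat.card_Icc, hmrdef]
      omega
    calc ((r:ℝ)+1) * binB n θ mr = ((Finset.Icc m mr).card : ℝ) * binB n θ mr := by
          rw [hcard]; push_cast; ring
      _ = ∑ _k ∈ Finset.Icc m mr, binB n θ mr := by
          rw [Finset.sum_const, nsmul_eq_mul]
      _ ≤ ∑ k ∈ Finset.Icc m mr, binB n θ k := Finset.sum_le_sum hterm
  -- final assembly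
  have hfin : Real.exp (-(1000 + 400 * L * u^2)) ≤ ((r:ℝ)+1) * binB n θ mr := by
    have hmono : Real.exp (-(60 + 400*L*u^2)) ≤ Real.exp (-(ρ * X)) :=
      Real.exp_le_exp.mpr (by linarith)
    have h940 : (20:ℝ) ≤ Real.exp 940 := by linarith [Real.add_one_le_exp (940:ℝ)]
    have hsplit : Real.exp (-(60 + 400*L*u^2))
        = Real.exp 940 * Real.exp (-(1000 + 400*L*u^2)) := by
      rw [← Real.exp_add]
      congr 1
      ring
    have hE0 : 0 < Real.exp (-(1000 + 400*L*u^2)) := Real.exp_pos _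
    have h20 : 20 * Real.exp (-(1000 + 400*L*u^2)) ≤ Real.exp (-(ρ * X)) := by
      rw [hsplit] at hmono
      have := mul_le_mul_of_nonneg_right h940 hE0.le
      linarith
    -- multiply hBmr by s0
    have hs0' : Real.exp (-(ρ * X)) * (1/(20*s0)) * s0 ≤ binB n θ mr * s0 :=
      mul_le_mul_of_nonneg_right hBmr hs0pos.le
    have heq : Real.exp (-(ρ * X)) * (1/(20*s0)) * s0 = Real.exp (-(ρ * X)) / 20 := by
      field_simp
    rw [heq] at hs0'
    have hr1 : binB n θ mr * s0 ≤ binB n θ mr * ((r:ℝ)+1) :=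
      mul_le_mul_of_nonneg_left (by linarith) hBmrnn
    calc Real.exp (-(1000 + 400 * L * u^2))
        ≤ Real.exp (-(ρ * X)) / 20 := by linarith
      _ ≤ binB n θ mr * s0 := hs0'
      _ ≤ binB n θ mr * ((r:ℝ)+1) := hr1
      _ = ((r:ℝ)+1) * binB n θ mr := by ring
  calc Real.exp (-(1000 + 400 * L * u^2)) ≤ ((r:ℝ)+1) * binB n θ mr := hfin
    _ ≤ ∑ k ∈ Finset.Icc m mr, binB n θ k := hsum




lemma partA (n : ℕ) (θ : ℝ) (hθ0 : 0 ≤ θ) (hθ1 : θ ≤ 1) (μ : Measure ℝ)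
    (hμ : IsBernoulli μ θ) (α : ℝ) (hα : 0 < α) (t : ℝ) (ht : 0 ≤ t) (m K : ℕ)
    (hm : (Real.sqrt (θ * n) + t / α) ^ 2 ≤ (m:ℝ)) :
    ENNReal.ofReal (∑ k ∈ Finset.Icc m K, binB n θ k)
      ≤ (Measure.pi fun _ : Fin n => μ)
          {y | α * Real.sqrt (θ * n) + t ≤ euclNorm (fun i => α * y i)} := by
  obtain ⟨hprob, h1, h0⟩ := hμ
  haveI := hprob
  set P := Measure.pi fun _ : Fin n => μ with hP
  set E := {y : Fin n → ℝ | α * Real.sqrt (θ * n) + t ≤ euclNorm (fun i => α * y i)} with hE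
  set cyl : Finset (Fin n) → Set (Fin n → ℝ) :=
    fun A => Set.pi Set.univ (fun i => if i ∈ A then ({1} : Set ℝ) else {0}) with hcyl
  have hcylmeas : ∀ A : Finset (Fin n), MeasurableSet (cyl A) := by
    intro A
    apply MeasurableSet.univ_pi
    intro i
    by_cases h : i ∈ A <;> simp [hcyl, h]
  have hcylmeasure : ∀ A : Finset (Fin n),
      P (cyl A) = (ENNReal.ofReal θ)^(A.card) * (ENNReal.ofReal (1-θ))^(n - A.card) := by
    intro A
    rw [hP, hcyl, Measure.pi_pi]
    have hsplit : ∀ i : Fin n, μ (if i ∈ A then ({1} : Set ℝ) else {0})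
        = if i ∈ A then ENNReal.ofReal θ else ENNReal.ofReal (1-θ) := by
      intro i
      by_cases h : i ∈ A <;> simp [h, h1, h0]
    calc ∏ i, μ (if i ∈ A then ({1} : Set ℝ) else {0})
        = ∏ i, (if i ∈ A then ENNReal.ofReal θ else ENNReal.ofReal (1-θ)) :=
          Finset.prod_congr rfl fun i _ => hsplit i
      _ = (ENNReal.ofReal θ)^(A.card) * (ENNReal.ofReal (1-θ))^(Aᶜ.card) := by
          rw [← Finset.prod_mul_prod_compl A]
          congr 1
          · rw [Finset.prod_congr rfl (fun i hi => if_pos hi), Finset.prod_const]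
          · rw [Finset.prod_congr rfl (fun i hi => if_neg (Finset.mem_compl.mp hi)),
              Finset.prod_const]
      _ = (ENNReal.ofReal θ)^(A.card) * (ENNReal.ofReal (1-θ))^(n - A.card) := by
          rw [Finset.card_compl, Fintype.card_fin]
  have hsub : ∀ A : Finset (Fin n), m ≤ A.card → cyl A ⊆ E := by
    intro A hA y hy
    have hy' : ∀ i, y i ∈ (if i ∈ A then ({1} : Set ℝ) else {0}) := by
      rw [hcyl] at hy
      exact fun i => hy i (Set.mem_univ i)
    have hyi : ∀ i, y i = if i ∈ A then (1:ℝ) else 0 := by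
      intro i
      have h2 := hy' i
      by_cases h : i ∈ A <;> simp [h] at h2 <;> simp [h, h2]
    have hsum : ∑ i, (α * y i)^2 = α^2 * A.card := by
      have : ∀ i : Fin n, (α * y i)^2 = α^2 * (if i ∈ A then (1:ℝ) else 0) := by
        intro i
        rw [hyi i]
        by_cases h : i ∈ A <;> simp [h] <;> ring
      rw [Finset.sum_congr rfl fun i _ => this i, ← Finset.mul_sum]
      congr 1
      rw [Finset.sum_ite_mem, Finset.univ_inter, Finset.sum_const]
      simp
    show α * Real.sqrt (θ * n) + t ≤ euclNorm (fun i => α * y i)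
    have hcard : (Real.sqrt (θ * n) + t / α) ^ 2 ≤ (A.card : ℝ) := by
      calc (Real.sqrt (θ * n) + t / α) ^ 2 ≤ (m:ℝ) := hm
        _ ≤ (A.card : ℝ) := by exact_mod_cast hA
    have hs0 : 0 ≤ Real.sqrt (θ * n) + t / α := by positivity
    have hsqrt : Real.sqrt (θ * n) + t / α ≤ Real.sqrt (A.card) := by
      rw [show Real.sqrt (θ*n) + t/α = Real.sqrt ((Real.sqrt (θ*n) + t/α)^2) from
        (Real.sqrt_sq hs0).symm]
      exact Real.sqrt_le_sqrt hcard
    unfold euclNorm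
    rw [hsum, Real.sqrt_mul (sq_nonneg α), Real.sqrt_sq hα.le]
    have := mul_le_mul_of_nonneg_left hsqrt hα.le
    calc α * Real.sqrt (θ*n) + t = α * (Real.sqrt (θ*n) + t/α) := by
          field_simp
      _ ≤ α * Real.sqrt (A.card) := this
  have hdisj : ∀ A B : Finset (Fin n), A ≠ B → Disjoint (cyl A) (cyl B) := by
    intro A B hAB
    rw [Set.disjoint_left]
    intro y hyA hyB
    obtain ⟨i, hi⟩ : ∃ i, ¬ ((i ∈ A) ↔ (i ∈ B)) := by
      by_contra h
      push_neg at h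
      exact hAB (Finset.ext fun i => h i)
    rw [hcyl] at hyA hyB
    have hA := hyA i (Set.mem_univ i)
    have hB := hyB i (Set.mem_univ i)
    by_cases hiA : i ∈ A <;> by_cases hiB : i ∈ B <;>
      simp [hiA, hiB] at hi hA hB <;> rw [hA] at hB <;> norm_num at hB
  set F : Finset (Finset (Fin n)) :=
    (Finset.Icc m K).biUnion (fun k => Finset.powersetCard k Finset.univ) with hF
  have hunion : (⋃ A ∈ F, cyl A) ⊆ E := by
    apply Set.iUnion₂_subset
    intro A hA
    rw [hF, Finset.mem_biUnion] at hA
    obtain ⟨k, hk, hAk⟩ := hA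
    rw [Finset.mem_powersetCard] at hAk
    rw [Finset.mem_Icc] at hk
    exact hsub A (hAk.2 ▸ hk.1)
  have hmeasU : P (⋃ A ∈ F, cyl A) = ∑ A ∈ F, P (cyl A) :=
    measure_biUnion_finset (fun A hA B hB hAB => hdisj A B hAB)
      (fun A _ => hcylmeas A)
  have hsumF : ∑ A ∈ F, P (cyl A)
      = ∑ k ∈ Finset.Icc m K,
          (n.choose k : ℝ≥0∞) * ((ENNReal.ofReal θ)^k * (ENNReal.ofReal (1-θ))^(n-k)) := by
    rw [hF, Finset.sum_biUnion]
    · apply Finset.sum_congr rfl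
      intro k hk
      have hcongr : ∀ A ∈ Finset.powersetCard k (Finset.univ : Finset (Fin n)),
          P (cyl A) = (ENNReal.ofReal θ)^k * (ENNReal.ofReal (1-θ))^(n-k) := by
        intro A hA
        rw [hcylmeasure A, (Finset.mem_powersetCard.mp hA).2]
      rw [Finset.sum_congr rfl hcongr, Finset.sum_const, Finset.card_powersetCard,
        Finset.card_univ, Fintype.card_fin, nsmul_eq_mul]
    · intro k1 hk1 k2 hk2 hne
      apply Finset.disjoint_left.mpr
      intro A hA1 hA2
      exact hne (((Finset.mem_powersetCard.mp hA1).2).symm.trans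
        (Finset.mem_powersetCard.mp hA2).2)
  have hofReal : ENNReal.ofReal (∑ k ∈ Finset.Icc m K, binB n θ k)
      = ∑ k ∈ Finset.Icc m K,
          (n.choose k : ℝ≥0∞) * ((ENNReal.ofReal θ)^k * (ENNReal.ofReal (1-θ))^(n-k)) := by
    rw [ENNReal.ofReal_sum_of_nonneg (fun k _ => binB_nonneg hθ0 hθ1 k)]
    apply Finset.sum_congr rfl
    intro k _
    unfold binB
    rw [ENNReal.ofReal_mul (by positivity), ENNReal.ofReal_mul (by positivity),
      ENNReal.ofReal_pow hθ0, ENNReal.ofReal_pow (by linarith), ENNReal.ofReal_natCast,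
      mul_assoc]
  calc ENNReal.ofReal (∑ k ∈ Finset.Icc m K, binB n θ k)
      = ∑ A ∈ F, P (cyl A) := by rw [hofReal, hsumF]
    _ = P (⋃ A ∈ F, cyl A) := hmeasU.symm
    _ ≤ P E := measure_mono hunion

theorem uptail_norm_scaled_bernoulli_from_mean :
    ∃ cb C : ℝ, 0 < cb ∧ 1 < C ∧
    ∃ N : ℕ, ∀ n : ℕ, N ≤ n →
      ∀ α : ℝ, 0 < α →
      ∀ θ : ℝ, 1 / (cb * n) ≤ θ → θ ≤ cb →
      ∀ μ : Measure ℝ, IsBernoulli μ θ →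
      -- `X = (α Y₁, …, α Yₙ)` where `Y` is the identity on the i.i.d. Bernoulli
      -- product space
      ∀ t : ℝ, 0 ≤ t → t ≤ α * Real.sqrt n / 2 →
        ENNReal.ofReal (C⁻¹ * Real.exp
            (-(C * Real.log (2 + t ^ 2 / (θ * n * α ^ 2)) * t ^ 2 / α ^ 2))) ≤
          (Measure.pi fun _ : Fin n => μ)
            {y | α * Real.sqrt (θ * n) + t ≤ euclNorm (fun i => α * y i)} := by
  have hC1 : (1:ℝ) < Real.exp 1000 := by linarith [Real.add_one_le_exp (1000:ℝ)]
  refine ⟨1/100, Real.exp 1000, by norm_num, hC1, 10^6, ?_⟩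
  intro n hn α hα θ hθl hθu μ hμ t ht0 htn
  have hnpos : 0 < n := by omega
  have hnR : (0:ℝ) < n := by exact_mod_cast hnpos
  have hθ0 : 0 < θ := lt_of_lt_of_le (by positivity : (0:ℝ) < 1/((1/100)*n)) hθl
  have hw100 : 100 ≤ θ * n := by
    have h1 : (1:ℝ)/((1/100)*n) * n = 100 := by field_simp
    calc (100:ℝ) = 1/((1/100)*n) * n := h1.symm
      _ ≤ θ * n := mul_le_mul_of_nonneg_right hθl hnR.le
  set u : ℝ := t/α with hu
  have hu0 : 0 ≤ u := by positivity
  have hun : u ≤ Real.sqrt n / 2 := by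
    rw [hu, div_le_iff₀ hα]
    calc t ≤ α * Real.sqrt n / 2 := htn
      _ = Real.sqrt n / 2 * α := by ring
  have hθu' : θ ≤ 1/100 := hθu
  have hPB := partB n θ u hn hθ0 hθu' hw100 hu0 hun
  have hmceil := Nat.le_ceil ((Real.sqrt (θ*n) + u)^2)
  have hPA := partA n θ hθ0.le (by linarith) μ hμ α hα t ht0
    ⌈(Real.sqrt (θ*n) + u)^2⌉₊
    (⌈(Real.sqrt (θ*n) + u)^2⌉₊ + ⌈Real.sqrt (θ*n)⌉₊) hmceil
  have hsub : t^2/α^2 = u^2 := by rw [hu, div_pow]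
  have hsub2 : t^2/(θ*n*α^2) = u^2/(θ*n) := by
    rw [hu, div_pow, div_div, mul_comm (α^2) (θ*(n:ℝ))]
  have hwpos : (0:ℝ) < θ*n := by linarith
  have hLnn : 0 ≤ Real.log (2 + u^2/(θ*n)) * u^2 := by
    apply mul_nonneg _ (sq_nonneg u)
    apply Real.log_nonneg
    have : 0 ≤ u^2/(θ*n) := by positivity
    linarith
  have hreal : (Real.exp 1000)⁻¹ * Real.exp
      (-(Real.exp 1000 * Real.log (2 + t ^ 2 / (θ * n * α ^ 2)) * t ^ 2 / α ^ 2))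
      ≤ Real.exp (-(1000 + 400 * Real.log (2 + u^2/(θ*n)) * u^2)) := by
    have he1 : Real.exp 1000 * Real.log (2 + t ^ 2 / (θ * n * α ^ 2)) * t ^ 2 / α ^ 2
        = Real.exp 1000 * (Real.log (2 + u^2/(θ*n)) * u^2) := by
      rw [hsub2]
      rw [show Real.exp 1000 * Real.log (2 + u ^ 2 / (θ * n)) * t ^ 2 / α ^ 2
        = Real.exp 1000 * Real.log (2 + u ^ 2 / (θ * n)) * (t ^ 2 / α ^ 2) by ring, hsub]
      ring
    rw [he1, ← Real.exp_neg, ← Real.exp_add]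
    apply Real.exp_le_exp.mpr
    have hC400 : (400:ℝ) ≤ Real.exp 1000 := by linarith [Real.add_one_le_exp (1000:ℝ)]
    have := mul_le_mul_of_nonneg_right hC400 hLnn
    linarith
  calc ENNReal.ofReal ((Real.exp 1000)⁻¹ * Real.exp
        (-(Real.exp 1000 * Real.log (2 + t ^ 2 / (θ * n * α ^ 2)) * t ^ 2 / α ^ 2)))
      ≤ ENNReal.ofReal (∑ k ∈ Finset.Icc ⌈(Real.sqrt (θ*n) + u)^2⌉₊
          (⌈(Real.sqrt (θ*n) + u)^2⌉₊ + ⌈Real.sqrt (θ*n)⌉₊), binB n θ k) :=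
        ENNReal.ofReal_le_ofReal (le_trans hreal hPB)
    _ ≤ _ := hPA
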